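/- arXiv:math/0301083 — 3 statements merged into one kernel-verified Lean document; each statement's English description precedes it below -/
import Mathlib

section
/- In particular, for a twisting cochain u = Σ x_π ⊗ γ_π as above, each γ_i (i ∈ [r]) is a cocycle, and for i < j one has dγ_{ij} = γ_j ∪ γ_i − γ_i ∪ γ_j. Consequently, on the homology H(M) of any right C-comodule M, the operators [m] ↦ [γ_i ∩ m] are well defined and pairwise commute, giving H(M) the structure of a module over the polynomial ring R[ξ_1,…,ξ_r]. -/
/-!
STATEMENT 5.  For a twisting cochain `u = Σ x_π ⊗ γ_π` (i.e. a weak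
`S`-comodule `(C, M, u)`), each `γ_i` is a cocycle and
`dγ_{ij} = γ_j ∪ γ_i - γ_i ∪ γ_j` for `i < j`.  Consequently the operators
`[m] ↦ [γ_i ∩ m]` on the homology `H(M)` of a right `C`-comodule `M` are well
defined and pairwise commute, giving `H(M)` the structure of a module over the
polynomial ring `R[ξ_1, …, ξ_r]`.

Encoding: as in Statement 4, degrees are handled by parity operators `e`; the
cap product is `γ ∩ m = (1 ⊗ γ) Δ_M(m)` (no Koszul sign here since `γ_i` has
even degree `2`); twisting cochain condition is taken in the component form
`dγ_π = -Σ_{(μ,ν)⊢π, μ≠∅≠ν} (-1)^{|μ|} sgn(ν,μ) γ_μ ∪ γ_ν`.  The homology-level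
claims are stated element-wise on cycles and boundaries: the operators are
chain maps, descend to homology, square-commute up to boundary, which is
exactly the asserted `R[ξ_1,…,ξ_r] = S^*`-module structure on `H(M)`.
-/

open TensorProduct

noncomputable section

structure DGStr (R : Type) [CommRing R] (M : Type) [AddCommGroup M] [Module R M] :
    Type where
  d : M →ₗ[R] M
  e : M →ₗ[R] M
  d_d : d ∘ₗ d = 0
  e_e : e ∘ₗ e = LinearMap.id
  e_d : e ∘ₗ d = - (d ∘ₗ e)

variable {R C M : Type} [CommRing R] [AddCommGroup C] [Module R C]
  [AddCommGroup M] [Module R M]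

def pm {W : Type} [AddCommGroup W] [Module R W] (e : W →ₗ[R] W) : Bool → (W →ₗ[R] W)
  | false => LinearMap.id
  | true => e

def dcoch (dgC : DGStr R C) (γ : C →ₗ[R] R) : C →ₗ[R] R :=
  -(γ ∘ₗ dgC.e ∘ₗ dgC.d)

def cupco (dgC : DGStr R C) (Δ : C →ₗ[R] C ⊗[R] C)
    (f g : C →ₗ[R] R) (pg : Bool) : C →ₗ[R] R :=
  LinearMap.mul' R R ∘ₗ map f g ∘ₗ map (pm dgC.e pg) LinearMap.id ∘ₗ Δ

def sgnShuffle {r : ℕ} (ν μ : Finset (Fin r)) : ℤ :=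
  (-1) ^ (∑ a ∈ ν, (μ.filter (fun b => b < a)).card)

/-- The cap product `γ ∩ m = (1 ⊗ γ) Δ_M(m)`, for `γ` of even degree
(no Koszul sign). -/
def capCo (ΔM : M →ₗ[R] M ⊗[R] C) (γ : C →ₗ[R] R) : M →ₗ[R] M :=
  (TensorProduct.rid R M).toLinearMap ∘ₗ map LinearMap.id γ ∘ₗ ΔM

/- ------------------------------------------------------------------ -/
/- Auxiliary lemmas                                                    -/
/- ------------------------------------------------------------------ -/

lemma aux_map_sub_right {X Y : Type} [AddCommGroup X] [Module R X]
    [AddCommGroup Y] [Module R Y] (f : M →ₗ[R] X) (g₁ g₂ : C →ₗ[R] Y) :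
    map f (g₁ - g₂) = map f g₁ - map f g₂ := by
  apply TensorProduct.ext'
  intro x c
  simp [TensorProduct.tmul_sub]

lemma aux_map_neg_left {X Y : Type} [AddCommGroup X] [Module R X]
    [AddCommGroup Y] [Module R Y] (f : M →ₗ[R] X) (g : C →ₗ[R] Y) :
    map (-f) g = - map f g := by
  apply TensorProduct.ext'
  intro x c
  simp [TensorProduct.neg_tmul]

lemma aux_rid_nat (h : M →ₗ[R] M) (g : C →ₗ[R] R) :
    (TensorProduct.rid R M).toLinearMap ∘ₗ map LinearMap.id g ∘ₗ map h LinearMap.id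
      = h ∘ₗ (TensorProduct.rid R M).toLinearMap ∘ₗ map LinearMap.id g := by
  apply TensorProduct.ext'
  intro x c
  simp

lemma aux_capCo_sub (ΔM : M →ₗ[R] M ⊗[R] C) (f g : C →ₗ[R] R) :
    capCo ΔM (f - g) = capCo ΔM f - capCo ΔM g := by
  apply LinearMap.ext
  intro m
  simp [capCo, aux_map_sub_right]

/-- If `g` kills boundaries then `γ ∩ ·` is a chain map. -/
lemma aux_chain (dgC : DGStr R C) (dgM : DGStr R M) (ΔM : M →ₗ[R] M ⊗[R] C)
    (hΔM_d : ΔM ∘ₗ dgM.d = (map dgM.d LinearMap.id + map dgM.e dgC.d) ∘ₗ ΔM)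
    (g : C →ₗ[R] R) (hg : g ∘ₗ dgC.d = 0) :
    capCo ΔM g ∘ₗ dgM.d = dgM.d ∘ₗ capCo ΔM g := by
  have key : (TensorProduct.rid R M).toLinearMap ∘ₗ map LinearMap.id g ∘ₗ
      (map dgM.d LinearMap.id + map dgM.e dgC.d)
      = dgM.d ∘ₗ (TensorProduct.rid R M).toLinearMap ∘ₗ map LinearMap.id g := by
    apply TensorProduct.ext'
    intro x c
    have h0 : g (dgC.d c) = 0 := LinearMap.congr_fun hg c
    simp [h0]
  apply LinearMap.ext
  intro m
  have h1 := LinearMap.congr_fun hΔM_d m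
  have h2 := LinearMap.congr_fun key (ΔM m)
  simp only [LinearMap.comp_apply] at h1 h2 ⊢
  simp only [capCo, LinearMap.comp_apply]
  rw [h1]
  exact h2

/-- Composition of cap products is cap product with the cup product. -/
lemma aux_capcap (dgC : DGStr R C) (Δ : C →ₗ[R] C ⊗[R] C) (ΔM : M →ₗ[R] M ⊗[R] C)
    (hco : map ΔM LinearMap.id ∘ₗ ΔM
      = (TensorProduct.assoc R M C C).symm.toLinearMap ∘ₗ map LinearMap.id Δ ∘ₗ ΔM)
    (f g : C →ₗ[R] R) :
    capCo ΔM f ∘ₗ capCo ΔM g = capCo ΔM (cupco dgC Δ f g false) := by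
  have hL : capCo ΔM f ∘ₗ (TensorProduct.rid R M).toLinearMap ∘ₗ map LinearMap.id g
      = ((TensorProduct.rid R M).toLinearMap ∘ₗ
          map ((TensorProduct.rid R M).toLinearMap ∘ₗ map LinearMap.id f) g)
        ∘ₗ map ΔM LinearMap.id := by
    apply TensorProduct.ext'
    intro x c
    simp [capCo]
  have hR : ((TensorProduct.rid R M).toLinearMap ∘ₗ
        map ((TensorProduct.rid R M).toLinearMap ∘ₗ map LinearMap.id f) g)
        ∘ₗ (TensorProduct.assoc R M C C).symm.toLinearMap ∘ₗ map LinearMap.id Δ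
      = (TensorProduct.rid R M).toLinearMap ∘ₗ map LinearMap.id (cupco dgC Δ f g false) := by
    apply TensorProduct.ext'
    intro x c
    simp only [LinearMap.comp_apply, map_tmul, LinearMap.id_apply, cupco, pm,
      TensorProduct.map_id, LinearEquiv.coe_coe]
    induction Δ c using TensorProduct.induction_on with
    | zero => simp
    | tmul c1 c2 =>
        simp [TensorProduct.assoc_symm_tmul, LinearMap.mul'_apply, smul_smul, mul_comm]
    | add u v hu hv =>
        simp only [TensorProduct.tmul_add, map_add, hu, hv]
  apply LinearMap.ext
  intro m
  have e0 : capCo ΔM f (capCo ΔM g m)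
      = (capCo ΔM f ∘ₗ (TensorProduct.rid R M).toLinearMap ∘ₗ map LinearMap.id g)
          (ΔM m) := rfl
  have e1 := LinearMap.congr_fun hL (ΔM m)
  have e2 := LinearMap.congr_fun hco m
  have e3 := LinearMap.congr_fun hR (ΔM m)
  simp only [LinearMap.comp_apply] at e0 e1 e2 e3 ⊢
  rw [e0, e1, e2, e3]
  rfl

/-- On cycles, capping with an exact cochain `g ∘ e ∘ d` gives a boundary. -/
lemma aux_bdry (dgC : DGStr R C) (dgM : DGStr R M) (ΔM : M →ₗ[R] M ⊗[R] C)
    (hΔM_d : ΔM ∘ₗ dgM.d = (map dgM.d LinearMap.id + map dgM.e dgC.d) ∘ₗ ΔM)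
    (g : C →ₗ[R] R) (m : M) (hm : dgM.d m = 0) :
    capCo ΔM (g ∘ₗ dgC.e ∘ₗ dgC.d) m
      = dgM.d ((TensorProduct.rid R M) (map dgM.e (g ∘ₗ dgC.e) (ΔM m))) := by
  set t := ΔM m with ht
  -- cycle condition transported through the comodule structure
  have ha : map dgM.e dgC.d t = - map dgM.d LinearMap.id t := by
    have h1 := LinearMap.congr_fun hΔM_d m
    simp only [LinearMap.comp_apply, hm, map_zero, LinearMap.add_apply] at h1
    rw [eq_comm, add_eq_zero_iff_eq_neg] at h1
    -- h1 : map d id t = - map e d t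
    rw [h1, neg_neg]
  -- rewrite (1 ⊗ d_C) t
  have hb : map LinearMap.id dgC.d t = map (dgM.d ∘ₗ dgM.e) LinearMap.id t := by
    have h1 : (map LinearMap.id dgC.d : M ⊗[R] C →ₗ[R] M ⊗[R] C)
        = map dgM.e (LinearMap.id : C →ₗ[R] C) ∘ₗ map dgM.e dgC.d := by
      rw [← TensorProduct.map_comp, dgM.e_e, LinearMap.id_comp]
    rw [h1, LinearMap.comp_apply, ha, map_neg, ← LinearMap.comp_apply,
      ← TensorProduct.map_comp, LinearMap.comp_id, dgM.e_d, aux_map_neg_left]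
    simp
  have hsplit : map (LinearMap.id : M →ₗ[R] M) (g ∘ₗ dgC.e ∘ₗ dgC.d)
      = map LinearMap.id (g ∘ₗ dgC.e) ∘ₗ map LinearMap.id dgC.d := by
    apply TensorProduct.ext'
    intro x c
    simp
  have hc : (TensorProduct.rid R M).toLinearMap ∘ₗ map LinearMap.id (g ∘ₗ dgC.e)
        ∘ₗ map (dgM.d ∘ₗ dgM.e) LinearMap.id
      = dgM.d ∘ₗ (TensorProduct.rid R M).toLinearMap ∘ₗ map dgM.e (g ∘ₗ dgC.e) := by
    apply TensorProduct.ext'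
    intro x c
    simp
  have hfin := LinearMap.congr_fun hc t
  simp only [LinearMap.comp_apply] at hfin
  calc capCo ΔM (g ∘ₗ dgC.e ∘ₗ dgC.d) m
      = (TensorProduct.rid R M) (map LinearMap.id (g ∘ₗ dgC.e ∘ₗ dgC.d) t) := rfl
    _ = (TensorProduct.rid R M)
          (map LinearMap.id (g ∘ₗ dgC.e) (map LinearMap.id dgC.d t)) := by
        rw [hsplit]; rfl
    _ = (TensorProduct.rid R M)
          (map LinearMap.id (g ∘ₗ dgC.e) (map (dgM.d ∘ₗ dgM.e) LinearMap.id t)) := by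
        rw [hb]
    _ = dgM.d ((TensorProduct.rid R M) (map dgM.e (g ∘ₗ dgC.e) t)) := hfin
theorem weak_comodule_homology_polynomial_action (r : ℕ)
    (dgC : DGStr R C) (Δ : C →ₗ[R] C ⊗[R] C)
    (γ : Finset (Fin r) → (C →ₗ[R] R))
    -- `γ_π` has degree `|π| + 1`:
    (hpar : ∀ π : Finset (Fin r), π ≠ ∅ →
      (γ π) ∘ₗ dgC.e = ((-1 : R) ^ (π.card + 1)) • γ π)
    -- `u = Σ x_π ⊗ γ_π` is a twisting cochain, in component form:
    (htw : ∀ π : Finset (Fin r), π ≠ ∅ →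
      dcoch dgC (γ π)
        = -∑ μ ∈ π.powerset,
            if μ ≠ ∅ ∧ μ ≠ π then
              (((-1 : R) ^ μ.card) * ((sgnShuffle (π \ μ) μ : ℤ) : R)) •
                cupco dgC Δ (γ μ) (γ (π \ μ)) (Nat.bodd ((π \ μ).card + 1))
            else 0)
    -- `M` is a right `C`-comodule:
    (dgM : DGStr R M) (ΔM : M →ₗ[R] M ⊗[R] C)
    (hΔM_coassoc : map ΔM LinearMap.id ∘ₗ ΔM
      = (TensorProduct.assoc R M C C).symm.toLinearMap ∘ₗ map LinearMap.id Δ ∘ₗ ΔM)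
    (hΔM_d : ΔM ∘ₗ dgM.d = (map dgM.d LinearMap.id + map dgM.e dgC.d) ∘ₗ ΔM)
    (hΔM_e : ΔM ∘ₗ dgM.e = map dgM.e dgC.e ∘ₗ ΔM) :
    -- (1) each `γ_i` is a cocycle:
    (∀ i : Fin r, dcoch dgC (γ {i}) = 0) ∧
    -- (2) for `i < j`:  `dγ_{ij} = γ_j ∪ γ_i - γ_i ∪ γ_j`
    --     (both factors of degree 2, hence even parity):
    (∀ i j : Fin r, i < j →
      dcoch dgC (γ {i, j})
        = cupco dgC Δ (γ {j}) (γ {i}) false - cupco dgC Δ (γ {i}) (γ {j}) false) ∧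
    -- (3) `γ_i ∩ ·` is a chain map, so `ξ_i · [m] = [γ_i ∩ m]` is well defined:
    (∀ i : Fin r, capCo ΔM (γ {i}) ∘ₗ dgM.d = dgM.d ∘ₗ capCo ΔM (γ {i})) ∧
    -- (4) well-definedness on homology classes:
    (∀ (i : Fin r) (m m' h : M), dgM.d m = 0 → dgM.d m' = 0 →
      m - m' = dgM.d h →
      ∃ h' : M, capCo ΔM (γ {i}) m - capCo ΔM (γ {i}) m' = dgM.d h') ∧
    -- (5) the operators pairwise commute on homology, giving the
    --     `R[ξ_1,…,ξ_r]`-module structure: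
    (∀ (i j : Fin r) (m : M), dgM.d m = 0 →
      ∃ h : M, capCo ΔM (γ {i}) (capCo ΔM (γ {j}) m)
        - capCo ΔM (γ {j}) (capCo ΔM (γ {i}) m) = dgM.d h) := by
  -- Part (1): each γ_i is a cocycle
  have part1 : ∀ i : Fin r, dcoch dgC (γ {i}) = 0 := by
    intro i
    rw [htw {i} (by simp)]
    rw [Finset.sum_eq_zero, neg_zero]
    intro μ hμ
    rw [Finset.mem_powerset, Finset.subset_singleton_iff] at hμ
    rcases hμ with h | h <;> simp [h]
  -- Part (2): dγ_{ij} = γ_j ∪ γ_i - γ_i ∪ γ_j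
  have part2 : ∀ i j : Fin r, i < j →
      dcoch dgC (γ {i, j})
        = cupco dgC Δ (γ {j}) (γ {i}) false - cupco dgC Δ (γ {i}) (γ {j}) false := by
    intro i j hij
    have hne : i ≠ j := ne_of_lt hij
    have hne' : j ≠ i := hne.symm
    have hπ : ({i, j} : Finset (Fin r)) ≠ ∅ := by simp
    have hsij : ({i} : Finset (Fin r)) ≠ ({i, j} : Finset (Fin r)) := by
      intro h
      have : j ∈ ({i} : Finset (Fin r)) := h ▸ (by simp : j ∈ ({i, j} : Finset (Fin r)))
      simp at this
      exact hne' this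
    have hsji : ({j} : Finset (Fin r)) ≠ ({i, j} : Finset (Fin r)) := by
      intro h
      have : i ∈ ({j} : Finset (Fin r)) := h ▸ (by simp : i ∈ ({i, j} : Finset (Fin r)))
      simp at this
      exact hne this
    have hdiffi : ({i, j} : Finset (Fin r)) \ {i} = {j} := by
      ext a
      simp only [Finset.mem_sdiff, Finset.mem_insert, Finset.mem_singleton]
      constructor
      · rintro ⟨h1 | h1, h2⟩
        · exact absurd h1 h2
        · exact h1
      · rintro rfl
        exact ⟨Or.inr rfl, hne'⟩
    have hdiffj : ({i, j} : Finset (Fin r)) \ {j} = {i} := by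
      ext a
      simp only [Finset.mem_sdiff, Finset.mem_insert, Finset.mem_singleton]
      constructor
      · rintro ⟨h1 | h1, h2⟩
        · exact h1
        · exact absurd h1 h2
      · rintro rfl
        exact ⟨Or.inl rfl, hne⟩
    have hpow : ({i, j} : Finset (Fin r)).powerset
        = {∅, {i}, {j}, ({i, j} : Finset (Fin r))} := by
      ext μ
      simp only [Finset.mem_powerset, Finset.mem_insert, Finset.mem_singleton]
      constructor
      · intro hsub
        by_cases hi : i ∈ μ <;> by_cases hj : j ∈ μ
        · right; right; right
          apply Finset.Subset.antisymm hsub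
          intro a ha
          simp only [Finset.mem_insert, Finset.mem_singleton] at ha
          rcases ha with rfl | rfl <;> assumption
        · right; left
          apply Finset.Subset.antisymm
          · intro a ha
            have := hsub ha
            simp only [Finset.mem_insert, Finset.mem_singleton] at this ⊢
            rcases this with rfl | rfl
            · rfl
            · exact absurd ha hj
          · simpa using hi
        · right; right; left
          apply Finset.Subset.antisymm
          · intro a ha
            have := hsub ha
            simp only [Finset.mem_insert, Finset.mem_singleton] at this ⊢
            rcases this with rfl | rfl
            · exact absurd ha hi
            · rfl
          · simpa using hj
        · left
          ext a
          simp only [Finset.notMem_empty, iff_false]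
          intro ha
          have := hsub ha
          simp only [Finset.mem_insert, Finset.mem_singleton] at this
          rcases this with rfl | rfl
          · exact hi ha
          · exact hj ha
      · rintro (rfl | rfl | rfl | rfl)
        · exact Finset.empty_subset _
        · intro a ha
          simp only [Finset.mem_singleton] at ha
          simp [ha]
        · intro a ha
          simp only [Finset.mem_singleton] at ha
          simp [ha]
        · exact Finset.Subset.refl _
    rw [htw _ hπ, hpow]
    have hij_ne : ({i} : Finset (Fin r)) ≠ {j} := fun h => hne (Finset.singleton_inj.mp h)
    rw [Finset.sum_insert (by
        simp only [Finset.mem_insert, Finset.mem_singleton]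
        push_neg
        exact ⟨Ne.symm (Finset.singleton_ne_empty i),
          Ne.symm (Finset.singleton_ne_empty j), Ne.symm hπ⟩),
      Finset.sum_insert (by
        simp only [Finset.mem_insert, Finset.mem_singleton]
        push_neg
        exact ⟨hij_ne, hsij⟩),
      Finset.sum_insert (by
        simp only [Finset.mem_singleton]
        exact hsji),
      Finset.sum_singleton]
    have hc1 : ({i} : Finset (Fin r)) ≠ ∅ ∧ ({i} : Finset (Fin r)) ≠ {i, j} :=
      ⟨Finset.singleton_ne_empty i, hsij⟩
    have hc2 : ({j} : Finset (Fin r)) ≠ ∅ ∧ ({j} : Finset (Fin r)) ≠ {i, j} :=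
      ⟨Finset.singleton_ne_empty j, hsji⟩
    rw [if_pos hc1, if_pos hc2]
    rw [if_neg (by simp), if_neg (by simp)]
    rw [hdiffi, hdiffj]
    have hsi : sgnShuffle ({j} : Finset (Fin r)) ({i} : Finset (Fin r)) = -1 := by
      simp [sgnShuffle, Finset.filter_singleton, hij]
    have hsj : sgnShuffle ({i} : Finset (Fin r)) ({j} : Finset (Fin r)) = 1 := by
      simp [sgnShuffle, Finset.filter_singleton, not_lt.mpr hij.le]
    rw [hsi, hsj]
    simp only [Finset.card_singleton, pow_one, Int.cast_neg, Int.cast_one, mul_neg_one,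
      mul_one, neg_neg, one_smul, neg_smul, zero_add, add_zero]
    have hb : Nat.bodd (1 + 1) = false := rfl
    rw [hb]
    module
  -- γ_i kills boundaries
  have hco : ∀ i : Fin r, γ {i} ∘ₗ dgC.d = 0 := by
    intro i
    have h1 := part1 i
    rw [dcoch, neg_eq_zero] at h1
    have h2 := hpar {i} (by simp)
    have h2' : γ {i} ∘ₗ dgC.e = γ {i} := by
      rw [h2]
      simp
    calc γ {i} ∘ₗ dgC.d = (γ {i} ∘ₗ dgC.e) ∘ₗ dgC.d := by rw [h2']
      _ = γ {i} ∘ₗ dgC.e ∘ₗ dgC.d := by rw [LinearMap.comp_assoc]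
      _ = 0 := h1
  -- Part (3): chain maps
  have part3 : ∀ i : Fin r, capCo ΔM (γ {i}) ∘ₗ dgM.d = dgM.d ∘ₗ capCo ΔM (γ {i}) :=
    fun i => aux_chain dgC dgM ΔM hΔM_d (γ {i}) (hco i)
  -- Part (4): well-definedness on homology
  have part4 : ∀ (i : Fin r) (m m' h : M), dgM.d m = 0 → dgM.d m' = 0 →
      m - m' = dgM.d h →
      ∃ h' : M, capCo ΔM (γ {i}) m - capCo ΔM (γ {i}) m' = dgM.d h' := by
    intro i m m' h _ _ hh
    refine ⟨capCo ΔM (γ {i}) h, ?_⟩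
    have := LinearMap.congr_fun (part3 i) h
    simp only [LinearMap.comp_apply] at this
    rw [← map_sub, hh, this]
  -- Part (5): commutation up to boundary
  have key : ∀ i j : Fin r, i < j → ∀ m : M, dgM.d m = 0 →
      ∃ h : M, capCo ΔM (γ {i}) (capCo ΔM (γ {j}) m)
        - capCo ΔM (γ {j}) (capCo ΔM (γ {i}) m) = dgM.d h := by
    intro i j hij m hm
    refine ⟨(TensorProduct.rid R M) (map dgM.e (γ {i, j} ∘ₗ dgC.e) (ΔM m)), ?_⟩
    have hcup : cupco dgC Δ (γ {i}) (γ {j}) false - cupco dgC Δ (γ {j}) (γ {i}) false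
        = γ {i, j} ∘ₗ dgC.e ∘ₗ dgC.d := by
      have h2 := part2 i j hij
      have heq : dcoch dgC (γ {i, j}) = -(γ {i, j} ∘ₗ dgC.e ∘ₗ dgC.d) := rfl
      rw [heq] at h2
      rw [← neg_sub (cupco dgC Δ (γ {j}) (γ {i}) false)
        (cupco dgC Δ (γ {i}) (γ {j}) false)]
      rw [eq_comm, ← neg_eq_iff_eq_neg] at h2
      rw [h2]
    have e1 := LinearMap.congr_fun (aux_capcap dgC Δ ΔM hΔM_coassoc (γ {i}) (γ {j})) m
    have e2 := LinearMap.congr_fun (aux_capcap dgC Δ ΔM hΔM_coassoc (γ {j}) (γ {i})) m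
    simp only [LinearMap.comp_apply] at e1 e2
    rw [e1, e2]
    have e3 := LinearMap.congr_fun
      (aux_capCo_sub ΔM (cupco dgC Δ (γ {i}) (γ {j}) false)
        (cupco dgC Δ (γ {j}) (γ {i}) false)) m
    simp only [LinearMap.sub_apply] at e3
    rw [← e3, hcup]
    exact aux_bdry dgC dgM ΔM hΔM_d (γ {i, j}) m hm
  have part5 : ∀ (i j : Fin r) (m : M), dgM.d m = 0 →
      ∃ h : M, capCo ΔM (γ {i}) (capCo ΔM (γ {j}) m)
        - capCo ΔM (γ {j}) (capCo ΔM (γ {i}) m) = dgM.d h := by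
    intro i j m hm
    rcases lt_trichotomy i j with hij | rfl | hji
    · exact key i j hij m hm
    · exact ⟨0, by rw [sub_self, map_zero]⟩
    · obtain ⟨h0, hh0⟩ := key j i hji m hm
      refine ⟨-h0, ?_⟩
      rw [map_neg, ← hh0]
      abel
  exact ⟨part1, part2, part3, part4, part5⟩

end
end

section
/- Suppose C* is a dg algebra with a cup-one product ∪₁ that is a chain homotopy for commutativity (d(α∪₁β) = α∪β − (−1)^{|α||β|}β∪α − dα∪₁β − (−1)^{|α|}α∪₁dβ) and a left derivation of the cup product (α∪₁(β∪γ) = (α∪₁β)∪γ + (−1)^{|α||β|+|β|}β∪(α∪₁γ)). Given cocycles ξ'_1,…,ξ'_r of cohomological degree 2, define ξ'_π for |π| ≥ 2 recursively by ξ'_π = ξ'_{π⁺} ∪₁ ξ'_{π'}, where π⁺ = max π and π' = π∖{π⁺}. Then t = Σ_{∅≠π⊂[r]} x_π ⊗ ξ'_π is a twisting cochain, i.e. the relations dξ'_π = − Σ_{(μ,ν)⊢π, μ≠∅≠ν} (−1)^{|μ|} sgn(ν,μ) ξ'_μ ∪ ξ'_ν hold for all nonempty π. -/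
/-!
STATEMENT 6 (Gugenheim–May).  Suppose the dg algebra `A` (thought of as `C^*`)
carries a cup-one product `∪₁` which is a chain homotopy for commutativity and
a left derivation of the (cup) product, vanishing when one factor has degree 0.
Given cocycles `ξ'_1, …, ξ'_r` of (cohomological) degree 2, define
`ξ'_π = ξ'_{π⁺} ∪₁ ξ'_{π'}` recursively (`π⁺ = max π`, `π' = π \ {π⁺}`).  Then
`t = Σ_{∅≠π} x_π ⊗ ξ'_π` is a twisting cochain, i.e.
`dξ'_π = - Σ_{(μ,ν)⊢π, μ≠∅≠ν} (-1)^{|μ|} sgn(ν,μ) ξ'_μ ∪ ξ'_ν` for all nonempty `π`.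

Degrees are encoded via the parity operator `e` (with `e a = ± a` expressing
that `a` is homogeneous of even/odd degree); the degree-0 part is encoded by a
submodule `G0` on which `∪₁` vanishes.
-/

noncomputable section

/-- `ξ'` on a (descending sorted) list: `ξ'_{[i]} = ξ_i` and
`ξ'_{i::t} = ξ_i ∪₁ ξ'_t`. -/
def xiList {A : Type} [Ring A] {r : ℕ} (cup1 : A → A → A) (ξ : Fin r → A) :
    List (Fin r) → A
  | [] => 0
  | [i] => ξ i
  | i :: t => cup1 (ξ i) (xiList cup1 ξ t)

/-- `ξ'_π`, defined by the recursion `ξ'_π = ξ'_{π⁺} ∪₁ ξ'_{π'}` where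
`π⁺ = max π` (the head of the descending sort) and `π' = π \ {π⁺}`. -/
def xiExt {A : Type} [Ring A] {r : ℕ} (cup1 : A → A → A) (ξ : Fin r → A)
    (π : Finset (Fin r)) : A :=
  xiList cup1 ξ ((π.sort (· ≤ ·)).reverse)

lemma xiList_cons {A : Type} [Ring A] {r : ℕ} (cup1 : A → A → A) (ξ : Fin r → A)
    (i : Fin r) (t : List (Fin r)) (ht : t ≠ []) :
    xiList cup1 ξ (i :: t) = cup1 (ξ i) (xiList cup1 ξ t) := by
  cases t with
  | nil => exact absurd rfl ht
  | cons j u => rfl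

lemma sort_rev_insert_max {r : ℕ} (m : Fin r) (s : Finset (Fin r))
    (h : ∀ b ∈ s, b < m) (hm : m ∉ s) :
    ((insert m s).sort (· ≤ ·)).reverse = m :: (s.sort (· ≤ ·)).reverse := by
  have hperm : ((insert m s).sort (· ≤ ·)).Perm (s.sort (· ≤ ·) ++ [m]) := by
    rw [← Multiset.coe_eq_coe]
    push_cast [Finset.sort_eq]
    rw [Finset.insert_val_of_notMem hm, ← Multiset.coe_add, add_comm,
      Multiset.coe_singleton, Multiset.singleton_add, Finset.sort_eq]
  have hsorted : List.Pairwise (· ≤ ·) (s.sort (· ≤ ·) ++ [m]) := by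
    rw [List.pairwise_append]
    refine ⟨Finset.pairwise_sort _ _, List.pairwise_singleton _ m, ?_⟩
    intro x hx y hy
    simp only [List.mem_singleton] at hy
    subst hy
    exact (h x ((Finset.mem_sort _).mp hx)).le
  have key : (insert m s).sort (· ≤ ·) = s.sort (· ≤ ·) ++ [m] :=
    List.Perm.eq_of_pairwise' (Finset.pairwise_sort _ _) hsorted hperm
  rw [key, List.reverse_append]
  simp

lemma xiExt_empty {A : Type} [Ring A] {r : ℕ} (cup1 : A → A → A) (ξ : Fin r → A) :
    xiExt cup1 ξ ∅ = 0 := by simp [xiExt, xiList]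

lemma xiExt_singleton {A : Type} [Ring A] {r : ℕ} (cup1 : A → A → A) (ξ : Fin r → A)
    (i : Fin r) : xiExt cup1 ξ {i} = ξ i := by
  simp [xiExt, xiList]

lemma xiExt_insert_max {A : Type} [Ring A] {r : ℕ} (cup1 : A → A → A) (ξ : Fin r → A)
    (m : Fin r) (s : Finset (Fin r)) (h : ∀ b ∈ s, b < m) (hm : m ∉ s) (hs : s ≠ ∅) :
    xiExt cup1 ξ (insert m s) = cup1 (ξ m) (xiExt cup1 ξ s) := by
  rw [xiExt, sort_rev_insert_max m s h hm, xiList_cons]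
  · rfl
  · simp only [ne_eq, List.reverse_eq_nil_iff]
    intro hc
    apply hs
    have := Finset.length_sort (α := Fin r) (· ≤ ·) (s := s)
    rw [hc] at this
    simpa [eq_comm, Finset.card_eq_zero] using this

lemma sgnShuffle_insert_right {r : ℕ} (m : Fin r) (ν μ : Finset (Fin r))
    (h : ∀ a ∈ ν, a < m) (hm : m ∉ μ) :
    sgnShuffle ν (insert m μ) = sgnShuffle ν μ := by
  unfold sgnShuffle
  congr 1
  apply Finset.sum_congr rfl
  intro a ha
  rw [Finset.filter_insert]
  rw [if_neg (by exact not_lt.2 (h a ha).le)]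

lemma sgnShuffle_insert_left {r : ℕ} (m : Fin r) (ν μ : Finset (Fin r))
    (h : ∀ b ∈ μ, b < m) (hm : m ∉ ν) :
    sgnShuffle (insert m ν) μ = (-1) ^ μ.card * sgnShuffle ν μ := by
  unfold sgnShuffle
  rw [Finset.sum_insert hm, pow_add]
  congr 2
  rw [Finset.filter_true_of_mem h]

lemma sgnShuffle_singleton_right {r : ℕ} (m : Fin r) (ν : Finset (Fin r))
    (h : ∀ a ∈ ν, a < m) : sgnShuffle ν {m} = 1 := by
  unfold sgnShuffle
  rw [show (∑ a ∈ ν, (({m} : Finset (Fin r)).filter (fun b => b < a)).card) = 0 from ?_]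
  · rfl
  · apply Finset.sum_eq_zero
    intro a ha
    rw [Finset.filter_singleton, if_neg (not_lt.2 (h a ha).le)]
    rfl

lemma sgnShuffle_singleton_left {r : ℕ} (m : Fin r) (μ : Finset (Fin r))
    (h : ∀ b ∈ μ, b < m) : sgnShuffle {m} μ = (-1) ^ μ.card := by
  unfold sgnShuffle
  rw [Finset.sum_singleton, Finset.filter_true_of_mem h]

/-- the Gugenheim–May recursion produces a twisting cochain. -/
theorem gugenheim_may_twisting_cochain (R A : Type) [CommRing R] [Ring A]
    [Algebra R A] (r : ℕ) (dga : DGStr R A)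
    -- `A` is a dg algebra with sign operator `e`:
    (hLeib : ∀ a b : A, dga.d (a * b) = dga.d a * b + dga.e a * dga.d b)
    (he_mul : ∀ a b : A, dga.e (a * b) = dga.e a * dga.e b)
    (he_one : dga.e 1 = 1)
    -- `∪₁` is `R`-bilinear; we use the uncurried function:
    (cup1 : A →ₗ[R] A →ₗ[R] A)
    -- `∪₁` has degree `+1`:
    (he_cup1 : ∀ a b : A, dga.e (cup1 a b) = -cup1 (dga.e a) (dga.e b))
    -- `α ∪₁ β = 0` if `α` or `β` has degree zero (`G0` is the degree-0 part):
    (G0 : Submodule R A)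
    (hcup1_zero : ∀ a b : A, a ∈ G0 ∨ b ∈ G0 → cup1 a b = 0)
    -- `∪₁` is a homotopy for commutativity of the product
    -- (`pa`, `pb` are the parities of the homogeneous elements `a`, `b`):
    (hhomotopy : ∀ (a b : A) (pa pb : Bool),
      dga.e a = (if pa then -a else a) → dga.e b = (if pb then -b else b) →
      dga.d (cup1 a b)
        = a * b - (if pa && pb then (-1 : R) else 1) • (b * a)
          - cup1 (dga.d a) b - (if pa then (-1 : R) else 1) • cup1 a (dga.d b))
    -- Hirsch formula: `∪₁` is a left derivation of the product:
    (hHirsch : ∀ (a b c : A) (pa pb : Bool),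
      dga.e a = (if pa then -a else a) → dga.e b = (if pb then -b else b) →
      cup1 a (b * c)
        = (cup1 a b) * c
          + (if Bool.xor (pa && pb) pb then (-1 : R) else 1) • (b * cup1 a c))
    -- the `ξ'_i` are cocycles of degree 2 (hence even):
    (ξ : Fin r → A)
    (hξd : ∀ i, dga.d (ξ i) = 0) (hξe : ∀ i, dga.e (ξ i) = ξ i) :
    ∀ π : Finset (Fin r), π ≠ ∅ →
      dga.d (xiExt (fun a b => cup1 a b) ξ π)
        = -∑ μ ∈ π.powerset,
            if μ ≠ ∅ ∧ μ ≠ π then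
              (((-1 : R) ^ μ.card) * ((sgnShuffle (π \ μ) μ : ℤ) : R)) •
                (xiExt (fun a b => cup1 a b) ξ μ * xiExt (fun a b => cup1 a b) ξ (π \ μ))
            else 0 := by

  -- parity of `xiList`
  have heList : ∀ l : List (Fin r),
      dga.e (xiList (fun a b => cup1 a b) ξ l)
        = ((-1 : R) ^ (l.length + 1)) • xiList (fun a b => cup1 a b) ξ l := by
    intro l
    induction l with
    | nil => simp [xiList]
    | cons i t ih =>
      cases t with
      | nil => simp [xiList, hξe i]
      | cons j u =>
        rw [xiList_cons _ _ _ _ (by simp)]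
        show dga.e (cup1 (ξ i) (xiList (fun a b => cup1 a b) ξ (j :: u))) = _
        rw [he_cup1, hξe i, ih, map_smul]
        simp only [List.length_cons]
        rw [pow_succ ((-1 : R)) (u.length + 1 + 1), mul_neg_one, neg_smul]
  have hparity : ∀ σ : Finset (Fin r),
      dga.e (xiExt (fun a b => cup1 a b) ξ σ)
        = ((-1 : R) ^ (σ.card + 1)) • xiExt (fun a b => cup1 a b) ξ σ := by
    intro σ
    have := heList ((σ.sort (· ≤ ·)).reverse)
    simpa [xiExt, Finset.length_sort] using this
  have hEb : ∀ σ : Finset (Fin r), ∃ pb : Bool,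
      (dga.e (xiExt (fun a b => cup1 a b) ξ σ)
        = if pb then -(xiExt (fun a b => cup1 a b) ξ σ) else xiExt (fun a b => cup1 a b) ξ σ)
      ∧ ((-1 : R) ^ (σ.card + 1) = if pb then -1 else 1) := by
    intro σ
    rcases Nat.even_or_odd σ.card with h | h
    · refine ⟨true, ?_, ?_⟩
      · rw [hparity, Odd.neg_one_pow (Even.add_one h)]
        simp
      · rw [Odd.neg_one_pow (Even.add_one h)]
        simp
    · refine ⟨false, ?_, ?_⟩
      · rw [hparity, Even.neg_one_pow (Odd.add_one h)]
        simp
      · rw [Even.neg_one_pow (Odd.add_one h)]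
        simp
  intro π
  induction π using Finset.strongInduction with
  | _ π IH =>
  intro hπ
  have hne : π.Nonempty := Finset.nonempty_iff_ne_empty.mpr hπ
  set X := xiExt (fun a b => cup1 a b) ξ with hXdef
  have hXsing : ∀ i : Fin r, X {i} = ξ i := fun i => xiExt_singleton _ _ i
  have hXins : ∀ (a : Fin r) (s : Finset (Fin r)), (∀ b ∈ s, b < a) → a ∉ s → s ≠ ∅ →
      X (insert a s) = cup1 (ξ a) (X s) :=
    fun a s h1 h2 h3 => xiExt_insert_max _ _ a s h1 h2 h3
  set m := π.max' hne with hmdef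
  set π' := π.erase m with hπ'def
  have hmπ : m ∈ π := π.max'_mem hne
  have hmπ' : m ∉ π' := Finset.notMem_erase m π
  have hins : insert m π' = π := Finset.insert_erase hmπ
  have hlt : ∀ b ∈ π', b < m := by
    intro b hb
    rw [hπ'def, Finset.mem_erase] at hb
    exact lt_of_le_of_ne (π.le_max' b hb.2) hb.1
  by_cases hπ'e : π' = ∅
  · -- singleton case
    have hsing : π = {m} := by rw [← hins, hπ'e, insert_empty_eq]
    rw [hsing]
    rw [hXsing m, hξd m]
    symm
    rw [neg_eq_zero]
    apply Finset.sum_eq_zero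
    intro μ hμ
    rw [Finset.mem_powerset, Finset.subset_singleton_iff] at hμ
    rcases hμ with rfl | rfl
    · simp
    · simp
  · -- main case
    have hXπ : X π = cup1 (ξ m) (X π') := by
      rw [← hins]
      exact hXins m π' hlt hmπ' hπ'e
    obtain ⟨pb, hEb1, hEb2⟩ := hEb π'
    have hstep : dga.d (X π) = ξ m * X π' - X π' * ξ m - cup1 (ξ m) (dga.d (X π')) := by
      rw [hXπ, hhomotopy (ξ m) _ false pb (by simp [hξe m]) hEb1, hξd m]
      simp
    have hIH := IH π' (Finset.erase_ssubset hmπ) hπ'e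
    have hC : cup1 (ξ m) (dga.d (X π')) = ∑ μ ∈ π'.powerset,
        ((if μ ≠ ∅ ∧ μ ≠ insert m π' then
            (((-1 : R) ^ μ.card) * ((sgnShuffle ((insert m π') \ μ) μ : ℤ) : R)) •
              (X μ * X ((insert m π') \ μ)) else 0)
        + (if insert m μ ≠ ∅ ∧ insert m μ ≠ insert m π' then
            (((-1 : R) ^ (insert m μ).card) *
                ((sgnShuffle ((insert m π') \ (insert m μ)) (insert m μ) : ℤ) : R)) •
              (X (insert m μ) * X ((insert m π') \ (insert m μ))) else 0)
        + ((if μ = ∅ then ξ m * X π' else 0) + (if μ = π' then -(X π' * ξ m) else 0))) := by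
      rw [hIH, map_neg, map_sum, ← Finset.sum_neg_distrib]
      apply Finset.sum_congr rfl
      intro μ hμ
      rw [Finset.mem_powerset] at hμ
      by_cases h0 : μ = ∅
      · subst h0
        rw [if_neg (by simp), map_zero, neg_zero]
        rw [if_neg (by intro h; exact h.1 rfl)]
        have hmem : insert m (∅ : Finset (Fin r)) = {m} := rfl
        rw [hmem]
        have hcond : ({m} : Finset (Fin r)) ≠ ∅ ∧ ({m} : Finset (Fin r)) ≠ insert m π' := by
          refine ⟨by simp, ?_⟩
          intro hc
          obtain ⟨b, hb⟩ := Finset.nonempty_iff_ne_empty.mpr hπ'e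
          have : b ∈ ({m} : Finset (Fin r)) := by
            rw [hc]; exact Finset.mem_insert_of_mem hb
          rw [Finset.mem_singleton] at this
          exact hmπ' (this ▸ hb)
        rw [if_pos hcond]
        rw [Finset.sdiff_singleton_eq_erase, Finset.erase_insert hmπ']
        rw [sgnShuffle_singleton_right m π' hlt]
        rw [if_pos rfl, if_neg (Ne.symm hπ'e)]
        rw [Finset.card_singleton, hXsing m]
        push_cast
        simp
      · by_cases h1 : μ = π'
        · subst h1
          rw [if_neg (by intro h; exact h.2 rfl), map_zero, neg_zero]
          have hne' : π' ≠ insert m π' := by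
            intro hc
            exact hmπ' (hc ▸ Finset.mem_insert_self m π')
          rw [if_pos ⟨h0, hne'⟩]
          rw [if_neg (by intro h; exact h.2 rfl)]
          rw [Finset.insert_sdiff_of_notMem _ hmπ', Finset.sdiff_self]
          have hmem : insert m (∅ : Finset (Fin r)) = {m} := rfl
          rw [hmem, sgnShuffle_singleton_left m π' hlt, hXsing m]
          rw [if_neg h0, if_pos rfl]
          push_cast
          rw [← pow_add]
          rw [Even.neg_one_pow (⟨π'.card, rfl⟩ : Even (π'.card + π'.card))]
          simp
        · -- generic case
          have hmμ : m ∉ μ := fun hc => hmπ' (hμ hc)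
          have hνne : π' \ μ ≠ ∅ := by
            rw [Ne, Finset.sdiff_eq_empty_iff_subset]
            intro hc
            exact h1 (Finset.Subset.antisymm hμ hc)
          have hmν : m ∉ π' \ μ := fun hc => hmπ' (Finset.sdiff_subset hc)
          have hltμ : ∀ b ∈ μ, b < m := fun b hb => hlt b (hμ hb)
          have hltν : ∀ b ∈ π' \ μ, b < m := fun b hb => hlt b (Finset.sdiff_subset hb)
          rw [if_pos ⟨h0, h1⟩, map_smul]
          obtain ⟨pbμ, hEbμ1, hEbμ2⟩ := hEb μ
          have hH := hHirsch (ξ m) (X μ) (X (π' \ μ)) false pbμ (by simp [hξe m]) hEbμ1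
          simp only [Bool.false_and, Bool.false_xor] at hH
          rw [← hEbμ2] at hH
          have hXμ : X (insert m μ) = cup1 (ξ m) (X μ) := hXins m μ hltμ hmμ h0
          have hXν : X (insert m (π' \ μ)) = cup1 (ξ m) (X (π' \ μ)) :=
            hXins m (π' \ μ) hltν hmν hνne
          rw [← hXμ, ← hXν] at hH
          rw [hH]
          have hc1 : μ ≠ insert m π' := by
            intro hc
            exact hmμ (hc ▸ Finset.mem_insert_self m π')
          have hc2 : insert m μ ≠ insert m π' := by
            intro hc
            apply h1
            rw [← Finset.erase_insert hmμ, hc, Finset.erase_insert hmπ']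
          rw [if_pos ⟨h0, hc1⟩, if_pos ⟨Finset.insert_ne_empty m μ, hc2⟩]
          rw [Finset.insert_sdiff_of_notMem _ hmμ]
          rw [Finset.sdiff_insert, Finset.insert_sdiff_of_notMem _ hmμ,
            Finset.erase_insert hmν]
          rw [Finset.card_insert_of_notMem hmμ]
          rw [sgnShuffle_insert_left m (π' \ μ) μ hltμ hmν]
          rw [sgnShuffle_insert_right m (π' \ μ) μ hltν hmμ]
          rw [if_neg h0, if_neg h1]
          push_cast
          match_scalars <;> ring
    rw [hstep, hC]
    rw [Finset.sum_add_distrib, Finset.sum_add_distrib, Finset.sum_add_distrib]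
    rw [Finset.sum_ite_eq' π'.powerset (∅ : Finset (Fin r)) (fun _ => ξ m * X π')]
    rw [Finset.sum_ite_eq' π'.powerset π' (fun _ => -(X π' * ξ m))]
    rw [if_pos (Finset.empty_mem_powerset π'), if_pos (Finset.mem_powerset_self π')]
    rw [← hins, Finset.sum_powerset_insert hmπ']
    abel


end
end

section
/- The cross-one product vanishes on the image of the shuffle map: for all simplicial sets X, Y, cochains α ∈ C*(X), β ∈ C*(Y), and chains a ∈ C(X), b ∈ C(Y), one has (α ×₁ β)(∇_{XY}(a ⊗ b)) = 0; equivalently ST_{XY} ∘ ∇_{XY} = 0 on normalised chains. -/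
/-!
STATEMENT 14.  The cross-one product vanishes on the image of the shuffle map:
for all simplicial sets `X`, `Y`, normalised cochains `α ∈ C^p(X)`,
`β ∈ C^q(Y)` and chains `a ∈ C(X)`, `b ∈ C(Y)`,
`(α ×₁ β)(∇(a ⊗ b)) = 0`; equivalently `ST ∘ ∇ = 0` on normalised chains.

Here `α ×₁ β = (-1)^{p+q} (α ⊗ β) ∘ ST` with the Steenrod map
`ST(x,y) = Σ_{0≤i<j≤n} (-1)^{i+j+ij} ∂_0^{i-1}∂_{j+1}^n x ⊗ ∂_{i+1}^{j-1} y`.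
-/

open TensorProduct

noncomputable section

/-- A simplicial set, encoded with ℕ-indexed face maps `d i : X_{n+1} → X_n`
and degeneracy maps `s i : X_n → X_{n+1}` (only indices in the valid range
are constrained, by the usual simplicial identities). -/
structure SST : Type 1 where
  X : ℕ → Type
  d : ℕ → {n : ℕ} → X (n+1) → X n
  s : ℕ → {n : ℕ} → X n → X (n+1)
  h_dd : ∀ {n : ℕ} (i j : ℕ), i < j → j ≤ n + 2 → ∀ x : X (n+2),
    d i (d j x) = d (j-1) (d i x)
  h_ds_lt : ∀ {n : ℕ} (i j : ℕ), i < j → j ≤ n + 1 → ∀ x : X (n+1),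
    d i (s j x) = s (j-1) (d i x)
  h_ds_eq : ∀ {n : ℕ} (j : ℕ), j ≤ n → ∀ x : X n, d j (s j x) = x
  h_ds_succ : ∀ {n : ℕ} (j : ℕ), j ≤ n → ∀ x : X n, d (j+1) (s j x) = x
  h_ds_gt : ∀ {n : ℕ} (i j : ℕ), j + 1 < i → i ≤ n + 2 → ∀ x : X (n+1),
    d i (s j x) = s j (d (i-1) x)
  h_ss : ∀ {n : ℕ} (i j : ℕ), i ≤ j → j ≤ n → ∀ x : X n,
    s i (s j x) = s (j+1) (s i x)

namespace SST

/-- Product of simplicial sets. -/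
def prod (S T : SST) : SST where
  X n := S.X n × T.X n
  d := fun i {n} x => (S.d i x.1, T.d i x.2)
  s := fun i {n} x => (S.s i x.1, T.s i x.2)
  h_dd := fun i j h1 h2 x => Prod.ext (S.h_dd i j h1 h2 x.1) (T.h_dd i j h1 h2 x.2)
  h_ds_lt := fun i j h1 h2 x => Prod.ext (S.h_ds_lt i j h1 h2 x.1) (T.h_ds_lt i j h1 h2 x.2)
  h_ds_eq := fun j h x => Prod.ext (S.h_ds_eq j h x.1) (T.h_ds_eq j h x.2)
  h_ds_succ := fun j h x => Prod.ext (S.h_ds_succ j h x.1) (T.h_ds_succ j h x.2)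
  h_ds_gt := fun i j h1 h2 x => Prod.ext (S.h_ds_gt i j h1 h2 x.1) (T.h_ds_gt i j h1 h2 x.2)
  h_ss := fun i j h1 h2 x => Prod.ext (S.h_ss i j h1 h2 x.1) (T.h_ss i j h1 h2 x.2)

/-- The set of all simplices of `S`. -/
abbrev Tot (S : SST) : Type := Σ n : ℕ, S.X n

/-- Degree cast. -/
def castX (S : SST) {a b : ℕ} (h : a = b) (x : S.X a) : S.X b := h ▸ x

/-- Iterated last face map `(∂̃)^k : X_{n+k} → X_n`. -/
def dTop (S : SST) : (k : ℕ) → {n : ℕ} → S.X (n + k) → S.X n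
  | 0, _, x => x
  | (k+1), n, x => S.dTop k (S.d (n + k + 1) x)

/-- Iterated zeroth face map `(∂_0)^k : X_{n+k} → X_n`. -/
def d0 (S : SST) : (k : ℕ) → {n : ℕ} → S.X (n + k) → S.X n
  | 0, _, x => x
  | (k+1), _, x => S.d0 k (S.d 0 x)

/-- `∂_a^{a+k-1} = ∂_a ∘ ∂_{a+1} ∘ ⋯ ∘ ∂_{a+k-1} : X_{n+k} → X_n`. -/
def dMid (S : SST) (a : ℕ) : (k : ℕ) → {n : ℕ} → S.X (n + k) → S.X n
  | 0, _, x => x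
  | (k+1), n, x => S.dMid a k (S.d (a + k) x)

/-- Iterated degeneracies `s_{i_q} ∘ ⋯ ∘ s_{i_1}` for a descending list. -/
def sIter (S : SST) : (l : List ℕ) → {n : ℕ} → S.X n → S.X (n + l.length)
  | [], _, x => x
  | (i :: t), _, x => S.s i (S.sIter t x)

/-- `s_ν : X_n → X_{n + |ν|}` for a finite set `ν ⊆ ℕ` of degeneracy indices
(applied in the usual order `s_ν = s_{ν_q} ∘ ⋯ ∘ s_{ν_1}`, `ν_1 < ⋯ < ν_q`). -/
def sSet (S : SST) (ν : Finset ℕ) {n : ℕ} (x : S.X n) : S.X (n + ν.card) :=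
  S.castX (by simp) (S.sIter ((ν.sort (· ≤ ·)).reverse) x)

end SST

variable (R : Type) [CommRing R]

/-- The (unnormalised) chain module on a simplicial set. -/
abbrev Ch (S : SST) : Type := S.Tot →₀ R

/-- The generator corresponding to a simplex. -/
def gsing (S : SST) {n : ℕ} (x : S.X n) : Ch R S := Finsupp.single ⟨n, x⟩ 1

/-- The submodule of degenerate chains (whose quotient is the normalised
chain complex). -/
def DegSub (S : SST) : Submodule R (Ch R S) :=
  Submodule.span R {c | ∃ (n j : ℕ) (x : S.X n), j ≤ n ∧ c = gsing R S (S.s j x)}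

/-- The simplicial boundary `∂ = Σ (-1)^k ∂_k`. -/
def bd (S : SST) : Ch R S →ₗ[R] Ch R S :=
  (Finsupp.lift (Ch R S) R S.Tot) fun z =>
    match z with
    | ⟨0, _⟩ => 0
    | ⟨n+1, x⟩ => ∑ k ∈ Finset.range (n+2), ((-1 : R)^k) • gsing R S (S.d k x)

/-- The parity operator `(-1)^deg` on chains. -/
def parOp (S : SST) : Ch R S →ₗ[R] Ch R S :=
  (Finsupp.lift (Ch R S) R S.Tot) fun z => ((-1 : R)^z.1) • Finsupp.single z 1

/-- The span of the simplices of degree `n`. -/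
def GrSub (S : SST) (n : ℕ) : Submodule R (Ch R S) :=
  Submodule.span R {c | ∃ x : S.X n, c = gsing R S x}

/-- The sign `sgn(μ, ν)` of a shuffle given by a partition `(μ, ν)`. -/
def shSign (μ ν : Finset ℕ) : ℤ := (-1) ^ (∑ a ∈ μ, (ν.filter (fun b => b < a)).card)

/-- The Eilenberg–Mac Lane shuffle map on a pair of simplices:
`∇(x ⊗ y) = Σ_{(μ,ν)⊢(m,n)} sgn(μ,ν) (s_ν x, s_μ y)`. -/
def shufAux (S T : SST) (p : S.Tot) (q : T.Tot) : Ch R (S.prod T) :=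
  ∑ ν ∈ (Finset.range (p.1 + q.1)).powerset,
    if h : ν ⊆ Finset.range (p.1 + q.1) ∧ ν.card = q.1 then
      ((shSign ((Finset.range (p.1 + q.1)) \ ν) ν : ℤ) : R) •
        Finsupp.single
          ⟨p.1 + q.1,
            (S.castX (by rw [h.2]) (S.sSet ν p.2),
             T.castX (by rw [Finset.card_sdiff, Finset.inter_eq_left.mpr h.1, Finset.card_range, h.2]; omega)
               (T.sSet ((Finset.range (p.1 + q.1)) \ ν) q.2))⟩ 1
    else 0

/-- The shuffle map as a bilinear map. -/
def shuf (S T : SST) : Ch R S →ₗ[R] Ch R T →ₗ[R] Ch R (S.prod T) :=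
  (Finsupp.lift (Ch R T →ₗ[R] Ch R (S.prod T)) R S.Tot) fun p =>
    (Finsupp.lift (Ch R (S.prod T)) R T.Tot) fun q => shufAux R S T p q

/-- The shuffle map `∇ : C(X) ⊗ C(Y) → C(X × Y)`. -/
def shufT (S T : SST) : Ch R S ⊗[R] Ch R T →ₗ[R] Ch R (S.prod T) :=
  TensorProduct.lift (shuf R S T)

/-- The Alexander–Whitney map
`AW(x, y) = Σ_i (∂̃)^{n-i} x ⊗ (∂_0)^i y : C(X × Y) → C(X) ⊗ C(Y)`. -/
def AWmap (S T : SST) : Ch R (S.prod T) →ₗ[R] Ch R S ⊗[R] Ch R T :=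
  (Finsupp.lift (Ch R S ⊗[R] Ch R T) R (S.prod T).Tot) fun p =>
    ∑ i ∈ (Finset.range (p.1 + 1)).attach,
      (Finsupp.single
          (⟨i.1, S.dTop (p.1 - i.1)
            (S.castX (by have := Finset.mem_range.mp i.2; omega) p.2.1)⟩ : S.Tot) (1 : R))
        ⊗ₜ[R]
      (Finsupp.single
          (⟨p.1 - i.1, T.d0 i.1
            (T.castX (by have := Finset.mem_range.mp i.2; omega) p.2.2)⟩ : T.Tot) (1 : R))

/-- The chain map induced by the swap `τ : X × Y → Y × X`. -/
def swapMap (S T : SST) : Ch R (S.prod T) →ₗ[R] Ch R (T.prod S) :=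
  (Finsupp.lift (Ch R (T.prod S)) R (S.prod T).Tot) fun p =>
    Finsupp.single ⟨p.1, (p.2.2, p.2.1)⟩ 1

/-- The graded transposition `T(a ⊗ b) = (-1)^{|a||b|} b ⊗ a`. -/
def twistMap (S T : SST) : Ch R S ⊗[R] Ch R T →ₗ[R] Ch R T ⊗[R] Ch R S :=
  TensorProduct.lift <|
    (Finsupp.lift (Ch R T →ₗ[R] Ch R T ⊗[R] Ch R S) R S.Tot) fun p =>
      (Finsupp.lift (Ch R T ⊗[R] Ch R S) R T.Tot) fun q =>
        ((-1 : R) ^ (p.1 * q.1)) • (Finsupp.single q 1 ⊗ₜ[R] Finsupp.single p 1)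

/-- The chain map induced by the diagonal. -/
def diagMap (S : SST) : Ch R S →ₗ[R] Ch R (S.prod S) :=
  (Finsupp.lift (Ch R (S.prod S)) R S.Tot) fun p => Finsupp.single ⟨p.1, (p.2, p.2)⟩ 1

/-- A simplex is nondegenerate if it is not of the form `s_j y`. -/
def NondegT (S : SST) : S.Tot → Prop
  | ⟨0, _⟩ => True
  | ⟨n+1, x⟩ => ∀ j ≤ n, ∀ y : S.X n, x ≠ S.s j y


/-- The cross-one product `α ×₁ β = (-1)^{p+q} (α ⊗ β) ∘ ST` on `C(X × Y)`. -/
def cross1Ch (S T : SST) (α : Ch R S →ₗ[R] R) (β : Ch R T →ₗ[R] R) (p q : ℕ) :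
    Ch R (S.prod T) →ₗ[R] R :=
  (Finsupp.lift R R (S.prod T).Tot) fun z =>
    ((-1 : R) ^ (p + q)) *
      ∑ i ∈ Finset.range (z.1 + 1), ∑ j ∈ Finset.range (z.1 + 1),
        if h : i < j ∧ j ≤ z.1 then
          ((-1 : R) ^ (i + j + i * j))
            * α (Finsupp.single
                (⟨j - i, S.d0 i (S.castX (by omega)
                    ((S.dTop (z.1 - j) (S.castX (by omega) z.2.1)) : S.X j))⟩ : S.Tot) 1)
            * β (Finsupp.single
                (⟨z.1 - (j - 1 - i),
                  T.dMid (i + 1) (j - 1 - i) (T.castX (by omega) z.2.2)⟩ : T.Tot) 1)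
        else 0

/-- `α` is a cochain of cohomological degree `p`. -/
def IsDeg (S : SST) (α : Ch R S →ₗ[R] R) (p : ℕ) : Prop :=
  ∀ (n : ℕ) (x : S.X n), n ≠ p → α (gsing R S x) = 0

/-- `α` is normalised. -/
def IsNorm (S : SST) (α : Ch R S →ₗ[R] R) : Prop :=
  ∀ (n j : ℕ) (x : S.X n), j ≤ n → α (gsing R S (S.s j x)) = 0


/-! ### Auxiliary machinery for Statement 14 -/

namespace SST

/-- Validity of a (descending) list of degeneracy indices over base dimension `n`. -/
def OkL : List ℕ → ℕ → Prop
  | [], _ => True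
  | (a :: l), n => a ≤ n + l.length ∧ OkL l n

lemma okL_cons {a : ℕ} {l : List ℕ} {n : ℕ} :
    OkL (a :: l) n ↔ a ≤ n + l.length ∧ OkL l n := Iff.rfl

variable (S : SST)

/-- Face operator on the total simplex set. -/
def dTot (i : ℕ) : S.Tot → S.Tot
  | ⟨0, x⟩ => ⟨0, x⟩
  | ⟨n+1, x⟩ => ⟨n, S.d i x⟩

/-- Degeneracy operator on the total simplex set. -/
def sTot (i : ℕ) (t : S.Tot) : S.Tot := ⟨t.1 + 1, S.s i t.2⟩

/-- Top face operator. -/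
def tTop (t : S.Tot) : S.Tot := S.dTot t.1 t

/-- Iterated middle faces `∂_a ∘ ⋯ ∘ ∂_{a+k-1}`. -/
def midTot (a : ℕ) : ℕ → S.Tot → S.Tot
  | 0, t => t
  | (k+1), t => midTot a k (S.dTot (a+k) t)

/-- Iterated degeneracies along a list. -/
def sListT : List ℕ → S.Tot → S.Tot
  | [], t => t
  | (i :: l), t => S.sTot i (sListT l t)

/-- Degeneracy predicate on `Tot`. -/
def DegT (t : S.Tot) : Prop := ∃ k u, k ≤ u.1 ∧ t = S.sTot k u

@[simp] lemma dTot_fst (i : ℕ) (t : S.Tot) : (S.dTot i t).1 = t.1 - 1 := by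
  obtain ⟨(_ | n), x⟩ := t <;> rfl

@[simp] lemma sTot_fst (i : ℕ) (t : S.Tot) : (S.sTot i t).1 = t.1 + 1 := rfl

@[simp] lemma tTop_fst (t : S.Tot) : (S.tTop t).1 = t.1 - 1 := S.dTot_fst _ _

lemma tTop_iter_fst (r : ℕ) (t : S.Tot) : ((S.tTop)^[r] t).1 = t.1 - r := by
  induction r generalizing t with
  | zero => rfl
  | succ r ih =>
      rw [Function.iterate_succ_apply, ih, tTop_fst]
      omega

lemma d0_iter_fst (r : ℕ) (t : S.Tot) : ((S.dTot 0)^[r] t).1 = t.1 - r := by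
  induction r generalizing t with
  | zero => rfl
  | succ r ih =>
      rw [Function.iterate_succ_apply, ih, dTot_fst]
      omega

@[simp] lemma midTot_zero (a : ℕ) (t : S.Tot) : S.midTot a 0 t = t := rfl

lemma midTot_succ (a k : ℕ) (t : S.Tot) :
    S.midTot a (k+1) t = S.midTot a k (S.dTot (a+k) t) := rfl

lemma midTot_fst (a r : ℕ) (t : S.Tot) : (S.midTot a r t).1 = t.1 - r := by
  induction r generalizing t with
  | zero => simp
  | succ r ih =>
      rw [midTot_succ, ih, dTot_fst]
      omega

@[simp] lemma sListT_nil (t : S.Tot) : S.sListT [] t = t := rfl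

@[simp] lemma sListT_cons (a : ℕ) (l : List ℕ) (t : S.Tot) :
    S.sListT (a :: l) t = S.sTot a (S.sListT l t) := rfl

@[simp] lemma sListT_fst (l : List ℕ) (t : S.Tot) :
    (S.sListT l t).1 = t.1 + l.length := by
  induction l with
  | nil => rfl
  | cons a l ih => simp [ih]; omega

/-! Simplicial identities at the `Tot` level. -/

lemma dTot_sTot_lt {a k : ℕ} {t : S.Tot} (h1 : a < k) (h2 : k ≤ t.1) :
    S.dTot a (S.sTot k t) = S.sTot (k-1) (S.dTot a t) := by
  obtain ⟨n, x⟩ := t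
  have h2' : k ≤ n := h2
  cases n with
  | zero => omega
  | succ n =>
      show (⟨n+1, S.d a (S.s k x)⟩ : S.Tot) = ⟨n+1, S.s (k-1) (S.d a x)⟩
      rw [S.h_ds_lt a k h1 (by omega) x]

lemma dTot_sTot_self {k : ℕ} {t : S.Tot} (h : k ≤ t.1) :
    S.dTot k (S.sTot k t) = t := by
  obtain ⟨n, x⟩ := t
  have h' : k ≤ n := h
  show (⟨n, S.d k (S.s k x)⟩ : S.Tot) = ⟨n, x⟩
  rw [S.h_ds_eq k h' x]

lemma dTot_sTot_gt {a k : ℕ} {t : S.Tot} (h1 : k + 1 < a) (h2 : a ≤ t.1 + 1) :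
    S.dTot a (S.sTot k t) = S.sTot k (S.dTot (a-1) t) := by
  obtain ⟨n, x⟩ := t
  have h2' : a ≤ n + 1 := h2
  cases n with
  | zero => omega
  | succ n =>
      show (⟨n+1, S.d a (S.s k x)⟩ : S.Tot) = ⟨n+1, S.s k (S.d (a-1) x)⟩
      rw [S.h_ds_gt a k h1 (by omega) x]

lemma sTot_sTot {a k : ℕ} {t : S.Tot} (h1 : k < a) (h2 : a ≤ t.1 + 1) :
    S.sTot a (S.sTot k t) = S.sTot k (S.sTot (a-1) t) := by
  obtain ⟨n, x⟩ := t
  have h2' : a ≤ n + 1 := h2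
  show (⟨n+2, S.s a (S.s k x)⟩ : S.Tot) = ⟨n+2, S.s k (S.s (a-1) x)⟩
  have h3 := S.h_ss k (a-1) (by omega) (by omega) x
  have h4 : a - 1 + 1 = a := by omega
  rw [h3, h4]

/-! Commutation of iterated faces past a degeneracy. -/

lemma d0_pass {i k : ℕ} {t : S.Tot} (h1 : i ≤ k) (h2 : k ≤ t.1) :
    (S.dTot 0)^[i] (S.sTot k t) = S.sTot (k - i) ((S.dTot 0)^[i] t) := by
  induction i generalizing k t with
  | zero => simp
  | succ i ih =>
      rw [Function.iterate_succ_apply, Function.iterate_succ_apply,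
        S.dTot_sTot_lt (show 0 < k by omega) h2,
        ih (by omega) (by rw [dTot_fst]; omega)]
      have : k - 1 - i = k - (i+1) := by omega
      rw [this]

lemma tTop_pass {r k : ℕ} {t : S.Tot} (h : k + r ≤ t.1) :
    (S.tTop)^[r] (S.sTot k t) = S.sTot k ((S.tTop)^[r] t) := by
  induction r generalizing t with
  | zero => simp
  | succ r ih =>
      rw [Function.iterate_succ_apply, Function.iterate_succ_apply]
      have h1 : S.tTop (S.sTot k t) = S.sTot k (S.tTop t) := by
        show S.dTot (t.1 + 1) (S.sTot k t) = _
        rw [S.dTot_sTot_gt (by omega) (by omega)]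
        rfl
      rw [h1, ih (by rw [tTop_fst]; omega)]

lemma mid_pass_low {a r k : ℕ} {t : S.Tot} (h1 : a + r ≤ k) (h2 : k ≤ t.1) :
    S.midTot a r (S.sTot k t) = S.sTot (k - r) (S.midTot a r t) := by
  induction r generalizing k t with
  | zero => simp
  | succ r ih =>
      rw [midTot_succ, midTot_succ,
        S.dTot_sTot_lt (show a + r < k by omega) h2,
        ih (by omega) (by rw [dTot_fst]; omega)]
      have : k - 1 - r = k - (r+1) := by omega
      rw [this]

/-- Pulling a degeneracy index out of a descending list. -/
lemma pull : ∀ (l : List ℕ) (k : ℕ) (t : S.Tot), l.Pairwise (· > ·) → OkL l t.1 → k ∈ l →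
    ∃ l', l'.length + 1 = l.length ∧ OkL l' t.1 ∧
      S.sListT l t = S.sTot k (S.sListT l' t) := by
  intro l
  induction l with
  | nil => simp
  | cons a rest ih =>
      intro k t hs hok hk
      rcases List.mem_cons.mp hk with rfl | hk'
      · exact ⟨rest, rfl, hok.2, rfl⟩
      · have ha : a > k := (List.pairwise_cons.mp hs).1 k hk'
        obtain ⟨l', hlen, hok', heq⟩ := ih k t (List.pairwise_cons.mp hs).2 hok.2 hk'
        refine ⟨(a-1) :: l', by simp [← hlen], ⟨?_, hok'⟩, ?_⟩
        · have := hok.1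
          simp at this ⊢
          omega
        · rw [sListT_cons, heq, S.sTot_sTot ha (by
            rw [sListT_fst]
            have := hok.1
            omega)]
          rfl

/-- The first (α) factor of a cross-one term on a shuffle is degenerate. -/
lemma alpha_deg (l : List ℕ) (k i r : ℕ) (t : S.Tot)
    (hs : l.Pairwise (· > ·)) (hok : OkL l t.1) (hk : k ∈ l)
    (hik : i ≤ k) (hkr : k + r + 1 ≤ t.1 + l.length) :
    S.DegT ((S.dTot 0)^[i] ((S.tTop)^[r] (S.sListT l t))) := by
  obtain ⟨l', hlen, hok', heq⟩ := S.pull l k t hs hok hk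
  rw [heq, S.tTop_pass (by rw [sListT_fst]; omega),
    S.d0_pass hik (by rw [tTop_iter_fst, sListT_fst]; omega)]
  exact ⟨k - i, _, by rw [d0_iter_fst, tTop_iter_fst, sListT_fst]; omega, rfl⟩

/-- The second (β) factor of a cross-one term on a shuffle is degenerate. -/
lemma beta_deg : ∀ (l : List ℕ) (i r : ℕ) (t : S.Tot),
    l.Pairwise (· > ·) → OkL l t.1 →
    (∀ k, i ≤ k → k ≤ i + r → k ∈ l) →
    S.DegT (S.midTot (i+1) r (S.sListT l t)) := by
  intro l
  induction l with
  | nil =>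
      intro i r t _ _ hsub
      exact absurd (hsub i le_rfl (by omega)) (by simp)
  | cons a rest ih =>
      intro i r t hs hok hsub
      have hm := hsub (i+r) (by omega) le_rfl
      have ha : i + r ≤ a := by
        rcases List.mem_cons.mp hm with h | h
        · omega
        · exact le_of_lt ((List.pairwise_cons.mp hs).1 _ h)
      rcases eq_or_lt_of_le ha with haeq | halt
      · cases r with
        | zero =>
            refine ⟨a, S.sListT rest t, ?_, rfl⟩
            have := hok.1
            rw [sListT_fst]
            omega
        | succ r' =>
            have hred : S.midTot (i+1) (r'+1) (S.sListT (a :: rest) t)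
                = S.midTot (i+1) r' (S.sListT rest t) := by
              rw [midTot_succ, sListT_cons]
              have e : i + 1 + r' = a := by omega
              rw [e, S.dTot_sTot_self (by
                rw [sListT_fst]
                have := hok.1
                omega)]
            rw [hred]
            apply ih i r' _ (List.pairwise_cons.mp hs).2 hok.2
            intro k hk1 hk2
            have hmem := hsub k hk1 (by omega)
            rcases List.mem_cons.mp hmem with h | h
            · exfalso; omega
            · exact h
      · rw [sListT_cons, S.mid_pass_low (by omega)
          (by rw [sListT_fst]; have := hok.1; omega)]
        refine ⟨a - r, _, ?_, rfl⟩
        rw [midTot_fst, sListT_fst]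
        have := hok.1
        omega

/-! Bridging lemmas from the raw operations to the `Tot`-level ones. -/

lemma tot_castX {a b : ℕ} (h : a = b) (x : S.X a) :
    (⟨b, S.castX h x⟩ : S.Tot) = ⟨a, x⟩ := by subst h; rfl

lemma tot_dTop (k n : ℕ) (x : S.X (n + k)) :
    (⟨n, S.dTop k x⟩ : S.Tot) = (S.tTop)^[k] ⟨n + k, x⟩ := by
  induction k with
  | zero => rfl
  | succ k ih =>
      show (⟨n, S.dTop k (S.d (n+k+1) x)⟩ : S.Tot) = _
      rw [ih (S.d (n+k+1) x), Function.iterate_succ_apply]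
      rfl

lemma tot_d0 (k n : ℕ) (x : S.X (n + k)) :
    (⟨n, S.d0 k x⟩ : S.Tot) = (S.dTot 0)^[k] ⟨n + k, x⟩ := by
  induction k with
  | zero => rfl
  | succ k ih =>
      show (⟨n, S.d0 k (S.d 0 x)⟩ : S.Tot) = _
      rw [ih (S.d 0 x), Function.iterate_succ_apply]
      rfl

lemma tot_dMid (a k n : ℕ) (x : S.X (n + k)) :
    (⟨n, S.dMid a k x⟩ : S.Tot) = S.midTot a k ⟨n + k, x⟩ := by
  induction k with
  | zero => rfl
  | succ k ih =>
      show (⟨n, S.dMid a k (S.d (a+k) x)⟩ : S.Tot) = _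
      rw [ih (S.d (a+k) x), midTot_succ]
      rfl

lemma tot_sIter (l : List ℕ) (n : ℕ) (x : S.X n) :
    (⟨n + l.length, S.sIter l x⟩ : S.Tot) = S.sListT l ⟨n, x⟩ := by
  induction l with
  | nil => rfl
  | cons a rest ih =>
      show (⟨n + rest.length + 1, S.s a (S.sIter rest x)⟩ : S.Tot)
        = S.sTot a (S.sListT rest ⟨n, x⟩)
      rw [← ih]
      rfl

lemma tot_sSet (ν : Finset ℕ) (n : ℕ) (x : S.X n) :
    (⟨n + ν.card, S.sSet ν x⟩ : S.Tot)
      = S.sListT ((ν.sort (· ≤ ·)).reverse) ⟨n, x⟩ := by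
  unfold sSet
  rw [S.tot_castX, S.tot_sIter]

end SST

section Aux14

variable {R : Type} [CommRing R]

lemma norm_vanish {S : SST} {α : Ch R S →ₗ[R] R} (hαn : IsNorm R S α)
    {t : S.Tot} (h : S.DegT t) : α (Finsupp.single t 1) = 0 := by
  obtain ⟨k, u, hk, rfl⟩ := h
  have := hαn u.1 k u.2 hk
  simpa [gsing, SST.sTot] using this

lemma sorted_gt_of_finset (ν : Finset ℕ) :
    ((ν.sort (· ≤ ·)).reverse).Pairwise (· > ·) := by
  exact List.pairwise_reverse.mpr ν.sortedLT_sort.pairwise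

lemma okL_of_bound : ∀ (l : List ℕ) (c n : ℕ), l.Pairwise (· > ·) →
    (∀ k ∈ l, k < c) → c ≤ n + l.length → SST.OkL l n := by
  intro l
  induction l with
  | nil => intro _ _ _ _ _; trivial
  | cons a rest ih =>
      intro c n hs hlt hc
      constructor
      · have := hlt a (by simp)
        simp only [List.length_cons] at hc
        omega
      · exact ih a n (List.pairwise_cons.mp hs).2
          (fun k hk => (List.pairwise_cons.mp hs).1 k hk)
          (by
            have := hlt a (by simp)
            simp only [List.length_cons] at hc
            omega)

end Aux14


section Main14

lemma lift_single {M : Type} [AddCommMonoid M] [Module R M] {X : Type}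
    (f : X → M) (z : X) (r : R) :
    (Finsupp.lift M R X) f (Finsupp.single z r) = r • f z := by
  rw [Finsupp.lift_apply, Finsupp.sum_single_index (zero_smul R (f z))]

lemma key_single (S T : SST) (α : Ch R S →ₗ[R] R) (β : Ch R T →ₗ[R] R) (p q : ℕ)
    (hαn : IsNorm R S α) (hβn : IsNorm R T β)
    (m n : ℕ) (x : S.X m) (y : T.X n) (ν : Finset ℕ)
    (hν : ν ⊆ Finset.range (m + n)) (hc : ν.card = n)
    (h1 : m + ν.card = m + n)
    (h2 : n + (Finset.range (m + n) \ ν).card = m + n) :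
    cross1Ch R S T α β p q (Finsupp.single
      ⟨m + n, (S.castX h1 (S.sSet ν x),
               T.castX h2 (T.sSet (Finset.range (m + n) \ ν) y))⟩ 1) = 0 := by
  have hμc : (Finset.range (m + n) \ ν).card = m := by
    rw [Finset.card_sdiff, Finset.inter_eq_left.mpr hν, Finset.card_range]
    omega
  have hlν : ((ν.sort (· ≤ ·)).reverse).length = n := by
    rw [List.length_reverse, Finset.length_sort, hc]
  have hlμ : (((Finset.range (m + n) \ ν).sort (· ≤ ·)).reverse).length = m := by
    rw [List.length_reverse, Finset.length_sort, hμc]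
  have hsν := sorted_gt_of_finset ν
  have hsμ := sorted_gt_of_finset (Finset.range (m + n) \ ν)
  have hokν : SST.OkL ((ν.sort (· ≤ ·)).reverse) m := by
    apply okL_of_bound _ (m + n) m hsν
    · intro k hk
      rw [List.mem_reverse, Finset.mem_sort] at hk
      exact Finset.mem_range.mp (hν hk)
    · rw [hlν]
  have hokμ : SST.OkL (((Finset.range (m + n) \ ν).sort (· ≤ ·)).reverse) n := by
    apply okL_of_bound _ (m + n) n hsμ
    · intro k hk
      rw [List.mem_reverse, Finset.mem_sort] at hk
      exact Finset.mem_range.mp (Finset.mem_sdiff.mp hk).1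
    · rw [hlμ]
      omega
  unfold cross1Ch
  rw [lift_single, one_smul]
  dsimp only
  apply mul_eq_zero_of_right
  apply Finset.sum_eq_zero
  intro i _
  apply Finset.sum_eq_zero
  intro j _
  split
  · next hij =>
    by_cases hex : ∃ k ∈ ν, i ≤ k ∧ k < j
    · obtain ⟨k, hkν, hik, hkj⟩ := hex
      rw [S.tot_d0, S.tot_castX, S.tot_dTop, S.tot_castX, S.tot_castX, S.tot_sSet]
      have hkN : k < m + n := Finset.mem_range.mp (hν hkν)
      have hdeg := S.alpha_deg ((ν.sort (· ≤ ·)).reverse) k i (m + n - j) ⟨m, x⟩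
        hsν hokν (by rw [List.mem_reverse, Finset.mem_sort]; exact hkν) hik
        (by rw [hlν]; show k + (m + n - j) + 1 ≤ m + n; omega)
      rw [norm_vanish hαn hdeg, mul_zero, zero_mul]
    · rw [T.tot_dMid, T.tot_castX, T.tot_castX, T.tot_sSet]
      have hdeg := T.beta_deg (((Finset.range (m + n) \ ν).sort (· ≤ ·)).reverse)
        i (j - 1 - i) ⟨n, y⟩ hsμ hokμ (by
          intro k hk1 hk2
          rw [List.mem_reverse, Finset.mem_sort, Finset.mem_sdiff, Finset.mem_range]
          refine ⟨by omega, fun hkν => hex ⟨k, hkν, hk1, by omega⟩⟩)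
      rw [norm_vanish hβn hdeg, mul_zero]
  · rfl

end Main14

/-- the cross-one product vanishes on the image of the
shuffle map. -/
theorem cross_one_vanishes_on_shuffles (S T : SST)
    (α : Ch R S →ₗ[R] R) (β : Ch R T →ₗ[R] R) (p q : ℕ)
    (hα : IsDeg R S α p) (hβ : IsDeg R T β q)
    (hαn : IsNorm R S α) (hβn : IsNorm R T β) :
    ∀ (a : Ch R S) (b : Ch R T),
      cross1Ch R S T α β p q (shufT R S T (a ⊗ₜ[R] b)) = 0 := by
  have base : ∀ (ps : S.Tot) (qs : T.Tot),
      cross1Ch R S T α β p q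
        (shufT R S T (Finsupp.single ps 1 ⊗ₜ[R] Finsupp.single qs 1)) = 0 := by
    intro ps qs
    have hsh : shufT R S T (Finsupp.single ps 1 ⊗ₜ[R] Finsupp.single qs 1)
        = shufAux R S T ps qs := by
      unfold shufT shuf
      rw [TensorProduct.lift.tmul, lift_single, one_smul, lift_single, one_smul]
    rw [hsh]
    unfold shufAux
    rw [map_sum]
    apply Finset.sum_eq_zero
    intro ν hν
    by_cases h : ν ⊆ Finset.range (ps.1 + qs.1) ∧ ν.card = qs.1
    · rw [dif_pos h, map_smul,
        key_single R S T α β p q hαn hβn ps.1 qs.1 ps.2 qs.2 ν h.1 h.2, smul_zero]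
    · rw [dif_neg h, map_zero]
  have hsb : ∀ (ps : S.Tot) (b : Ch R T),
      cross1Ch R S T α β p q (shufT R S T (Finsupp.single ps 1 ⊗ₜ[R] b)) = 0 := by
    intro ps b
    induction b using Finsupp.induction_linear with
    | zero => simp
    | add f g hf hg => rw [TensorProduct.tmul_add, map_add, map_add, hf, hg, add_zero]
    | single qs r =>
        have e : (Finsupp.single qs r : Ch R T) = r • Finsupp.single qs 1 := by
          rw [Finsupp.smul_single, smul_eq_mul, mul_one]
        rw [e, TensorProduct.tmul_smul, map_smul, map_smul, base, smul_zero]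
  intro a b
  induction a using Finsupp.induction_linear with
  | zero => simp
  | add f g hf hg => rw [TensorProduct.add_tmul, map_add, map_add, hf, hg, add_zero]
  | single ps r =>
      have e : (Finsupp.single ps r : Ch R S) = r • Finsupp.single ps 1 := by
        rw [Finsupp.smul_single, smul_eq_mul, mul_one]
      rw [e, ← TensorProduct.smul_tmul', map_smul, map_smul, hsb, smul_zero]

end
end
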